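/- arXiv:2205.13844 — 5 statements merged into one kernel-verified Lean document; each statement's English description precedes it below -/
import Mathlib

section
/- Let $\alpha > 0$ and let $\beta:\mathbb{R}\to\mathbb{R}$ be continuous and $2\pi$-periodic with $\int_0^{2\pi}\beta(s)\,ds > 0$. Then any $2\pi$-periodic solution $x$ of $x'(t) = \alpha - \beta(t)x(t)$ satisfies for all $t$: $\frac{2\alpha\pi \exp(-\int_0^{2\pi}\beta^+(s)ds)}{1-\exp(-\int_0^{2\pi}\beta(s)ds)} \le x(t) \le \frac{2\alpha\pi \exp(\int_0^{2\pi}\beta^-(s)ds)}{1-\exp(-\int_0^{2\pi}\beta(s)ds)}$, where $\beta^+ = \max(\beta,0)$ and $\beta^- = -\min(\beta,0)$. -/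
open Real intervalIntegral

/-- Bounds for any `2π`-periodic solution of `x' = α - β(t) x`
with `α > 0` and `β` continuous, `2π`-periodic, of positive mean, in terms of
the positive part `β⁺ = max(β,0)` and negative part `β⁻ = -min(β,0)`. -/
theorem stmt1 (α : ℝ) (hα : 0 < α) (β : ℝ → ℝ)
    (hβ : Continuous β) (hβper : Function.Periodic β (2 * π))
    (hβint : 0 < ∫ s in (0:ℝ)..(2 * π), β s)
    (x : ℝ → ℝ) (hxper : Function.Periodic x (2 * π))
    (hx : ∀ t : ℝ, HasDerivAt x (α - β t * x t) t) :
    ∀ t : ℝ,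
      (2 * α * π * Real.exp (-(∫ s in (0:ℝ)..(2 * π), max (β s) 0))) /
          (1 - Real.exp (-(∫ s in (0:ℝ)..(2 * π), β s))) ≤ x t ∧
      x t ≤ (2 * α * π * Real.exp (∫ s in (0:ℝ)..(2 * π), -min (β s) 0)) /
          (1 - Real.exp (-(∫ s in (0:ℝ)..(2 * π), β s))) := by
  intro t
  have hπ : (0:ℝ) < 2 * π := by positivity
  set T : ℝ := 2 * π with hT
  set I : ℝ := ∫ s in (0:ℝ)..T, β s with hIdef
  set P : ℝ := ∫ s in (0:ℝ)..T, max (β s) 0 with hPdef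
  set N : ℝ := ∫ s in (0:ℝ)..T, -min (β s) 0 with hNdef
  set B : ℝ → ℝ := fun u => ∫ s in (0:ℝ)..u, β s with hBdef
  have hBderiv : ∀ u : ℝ, HasDerivAt B (β u) u := fun u =>
    (hβ.integral_hasStrictDerivAt 0 u).hasDerivAt
  have hBcont : Continuous B := by
    rw [continuous_iff_continuousAt]; exact fun u => (hBderiv u).continuousAt
  -- shift property of B
  have hBshift : ∀ u : ℝ, B (u + T) = B u + I := by
    intro u
    have h1 : (∫ s in (0:ℝ)..u, β s) + ∫ s in u..(u + T), β s
        = ∫ s in (0:ℝ)..(u + T), β s :=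
      intervalIntegral.integral_add_adjacent_intervals
        (hβ.intervalIntegrable _ _) (hβ.intervalIntegrable _ _)
    have h2 : (∫ s in u..(u + T), β s) = I := by
      have := hβper.intervalIntegral_add_eq u 0
      simpa [hIdef] using this
    simp only [hBdef]
    linarith [h1, h2]
  -- the integrating factor identity
  have hgderiv : ∀ u ∈ Set.uIcc (t - T) t,
      HasDerivAt (fun u => x u * Real.exp (B u)) (α * Real.exp (B u)) u := by
    intro u _
    have h : HasDerivAt (fun u => x u * Real.exp (B u))
        ((α - β u * x u) * Real.exp (B u) + x u * (Real.exp (B u) * β u)) u :=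
      (hx u).mul ((hBderiv u).exp)
    convert h using 1
    ring
  have hcontInt : Continuous fun u => α * Real.exp (B u) :=
    continuous_const.mul (Real.continuous_exp.comp hBcont)
  have hFTC : (∫ u in (t - T)..t, α * Real.exp (B u))
      = x t * Real.exp (B t) - x (t - T) * Real.exp (B (t - T)) :=
    intervalIntegral.integral_eq_sub_of_hasDerivAt hgderiv
      (hcontInt.intervalIntegrable _ _)
  have hxtT : x (t - T) = x t := by
    have := hxper (t - T)
    rw [sub_add_cancel] at this
    exact this.symm
  have hBtT : B (t - T) = B t - I := by
    have := hBshift (t - T)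
    rw [sub_add_cancel] at this
    linarith
  have hexpsub : Real.exp (B t - I) = Real.exp (B t) * Real.exp (-I) := by
    rw [← Real.exp_add]; ring_nf
  have key : (∫ u in (t - T)..t, α * Real.exp (B u))
      = x t * Real.exp (B t) * (1 - Real.exp (-I)) := by
    rw [hFTC, hxtT, hBtT, hexpsub]; ring
  -- pointwise bounds on B on the interval
  have hpercont : Continuous fun s => max (β s) 0 := hβ.max continuous_const
  have hnegcont : Continuous fun s => -min (β s) 0 := (hβ.min continuous_const).neg
  have hPper : Function.Periodic (fun s => max (β s) 0) T := fun s => by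
    simp [hβper s]
  have hNper : Function.Periodic (fun s => -min (β s) 0) T := fun s => by
    simp [hβper s]
  have hPfull : (∫ s in (t - T)..t, max (β s) 0) = P := by
    have := hPper.intervalIntegral_add_eq (t - T) 0
    simpa [sub_add_cancel, hPdef] using this
  have hNfull : (∫ s in (t - T)..t, -min (β s) 0) = N := by
    have := hNper.intervalIntegral_add_eq (t - T) 0
    simpa [sub_add_cancel, hNdef] using this
  have hBbound : ∀ u ∈ Set.Icc (t - T) t, B t - P ≤ B u ∧ B u ≤ B t + N := by
    intro u hu
    have hu1 : t - T ≤ u := hu.1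
    have hu2 : u ≤ t := hu.2
    have hsplit : B u + (∫ s in u..t, β s) = B t :=
      intervalIntegral.integral_add_adjacent_intervals
        (hβ.intervalIntegrable _ _) (hβ.intervalIntegrable _ _)
    have hsplitP : (∫ s in (t - T)..u, max (β s) 0) + (∫ s in u..t, max (β s) 0)
        = ∫ s in (t - T)..t, max (β s) 0 :=
      intervalIntegral.integral_add_adjacent_intervals
        (hpercont.intervalIntegrable _ _) (hpercont.intervalIntegrable _ _)
    have hsplitN : (∫ s in (t - T)..u, -min (β s) 0) + (∫ s in u..t, -min (β s) 0)
        = ∫ s in (t - T)..t, -min (β s) 0 :=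
      intervalIntegral.integral_add_adjacent_intervals
        (hnegcont.intervalIntegrable _ _) (hnegcont.intervalIntegrable _ _)
    have hP1 : (∫ s in u..t, β s) ≤ ∫ s in u..t, max (β s) 0 :=
      intervalIntegral.integral_mono_on hu2 (hβ.intervalIntegrable _ _)
        (hpercont.intervalIntegrable _ _) (fun s _ => le_max_left _ _)
    have hP2 : (0:ℝ) ≤ ∫ s in (t - T)..u, max (β s) 0 :=
      intervalIntegral.integral_nonneg hu1 (fun s _ => le_max_right _ _)
    have hN1 : (∫ s in u..t, -β s) ≤ ∫ s in u..t, -min (β s) 0 :=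
      intervalIntegral.integral_mono_on hu2 (hβ.neg.intervalIntegrable _ _)
        (hnegcont.intervalIntegrable _ _)
        (fun s _ => neg_le_neg (min_le_left _ _))
    have hN2 : (0:ℝ) ≤ ∫ s in (t - T)..u, -min (β s) 0 :=
      intervalIntegral.integral_nonneg hu1
        (fun s _ => neg_nonneg.2 (min_le_right _ _))
    have hneg : (∫ s in u..t, -β s) = -(∫ s in u..t, β s) := by
      simp [intervalIntegral.integral_neg]
    constructor
    · linarith [hPfull, hsplit, hsplitP, hP1, hP2]
    · linarith [hNfull, hsplit, hsplitN, hN1, hN2, hneg]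
  -- integral bounds
  have htle : t - T ≤ t := by linarith
  have hlow : T * (α * Real.exp (B t - P)) ≤ ∫ u in (t - T)..t, α * Real.exp (B u) := by
    have h := intervalIntegral.integral_mono_on (μ := MeasureTheory.volume) htle
      (continuous_const.intervalIntegrable _ _) (hcontInt.intervalIntegrable _ _)
      (fun u hu => by
        have := (hBbound u hu).1
        exact mul_le_mul_of_nonneg_left (Real.exp_le_exp.2 this) hα.le)
    calc T * (α * Real.exp (B t - P))
        = ∫ _ in (t - T)..t, α * Real.exp (B t - P) := by
          rw [intervalIntegral.integral_const]; simp
      _ ≤ _ := h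
  have hhigh : (∫ u in (t - T)..t, α * Real.exp (B u)) ≤ T * (α * Real.exp (B t + N)) := by
    have h := intervalIntegral.integral_mono_on (μ := MeasureTheory.volume) htle
      (hcontInt.intervalIntegrable _ _) (continuous_const.intervalIntegrable _ _)
      (fun u hu => by
        have := (hBbound u hu).2
        exact mul_le_mul_of_nonneg_left (Real.exp_le_exp.2 this) hα.le)
    calc (∫ u in (t - T)..t, α * Real.exp (B u))
        ≤ ∫ _ in (t - T)..t, α * Real.exp (B t + N) := h
      _ = T * (α * Real.exp (B t + N)) := by
          rw [intervalIntegral.integral_const]; simp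
  have hE : 0 < 1 - Real.exp (-I) := by
    have : Real.exp (-I) < 1 := Real.exp_lt_one_iff.2 (by linarith [hβint])
    linarith
  have hEB : 0 < Real.exp (B t) := Real.exp_pos _
  have hexpP : Real.exp (B t - P) = Real.exp (B t) * Real.exp (-P) := by
    rw [← Real.exp_add]; ring_nf
  have hexpN : Real.exp (B t + N) = Real.exp (B t) * Real.exp N := by
    rw [← Real.exp_add]
  rw [key] at hlow hhigh
  constructor
  · rw [div_le_iff₀ hE]
    have h1 : (2 * α * π * Real.exp (-P)) * Real.exp (B t)
        ≤ (x t * (1 - Real.exp (-I))) * Real.exp (B t) := by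
      rw [hexpP, hT] at hlow
      linarith [hlow]
    exact le_of_mul_le_mul_right h1 hEB
  · rw [le_div_iff₀ hE]
    have h1 : (x t * (1 - Real.exp (-I))) * Real.exp (B t)
        ≤ (2 * α * π * Real.exp N) * Real.exp (B t) := by
      rw [hexpN, hT] at hhigh
      linarith [hhigh]
    exact le_of_mul_le_mul_right h1 hEB
end

section
/- Consider the second-order Winfree model with inertia for $N$ oscillators: $\dot\theta^i = \omega^i$, $\dot\omega^i = -\gamma\omega^i + \nu^i - \frac{\kappa}{N}\sin\theta^i \sum_{j=1}^N(1+\cos\theta^j)$, with $\gamma>0$, $\kappa \ge 0$. Let $\omega^c_t = \frac1N\sum_i \omega^i_t$ and $\nu^c = \frac1N\sum_i \nu^i$. If $\omega^c_0 > 0$ and $\kappa < \nu^c/2$, then for all $t\ge 0$: $0 < \min\{\omega^c_0, (\nu^c - 2\kappa)/\gamma\} \le \omega^c_t \le \max\{\omega^c_0, (\nu^c+2\kappa)/\gamma\}$. -/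
open Real

/-- Uniform bounds for the average frequency `ω^c` of the
second-order Winfree model with inertia, provided `ω^c_0 > 0` and `κ < ν^c/2`. -/
theorem stmt3 (N : ℕ) (hN : 0 < N) (θ ω : Fin N → ℝ → ℝ) (ν : Fin N → ℝ)
    (γ κ : ℝ) (hγ : 0 < γ) (hκ : 0 ≤ κ)
    (hθ : ∀ i, ∀ t : ℝ, HasDerivAt (θ i) (ω i t) t)
    (hω : ∀ i, ∀ t : ℝ, HasDerivAt (ω i)
      (-γ * ω i t + ν i - κ / N * Real.sin (θ i t) * ∑ j, (1 + Real.cos (θ j t))) t)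
    (hωc0 : 0 < (∑ i, ω i 0) / N)
    (hκν : κ < ((∑ i, ν i) / N) / 2) :
    ∀ t : ℝ, 0 ≤ t →
      0 < min ((∑ i, ω i 0) / N) (((∑ i, ν i) / N - 2 * κ) / γ) ∧
      min ((∑ i, ω i 0) / N) (((∑ i, ν i) / N - 2 * κ) / γ) ≤ (∑ i, ω i t) / N ∧
      (∑ i, ω i t) / N ≤ max ((∑ i, ω i 0) / N) (((∑ i, ν i) / N + 2 * κ) / γ) := by
  intro t ht
  have hNpos : (0:ℝ) < N := by exact_mod_cast hN
  have hNne : (N:ℝ) ≠ 0 := ne_of_gt hNpos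
  set νc : ℝ := (∑ i, ν i) / N with hνc
  set W : ℝ → ℝ := fun s => (∑ i, ω i s) / N with hWdef
  set E : ℝ → ℝ := fun s =>
    κ / (N:ℝ)^2 * ((∑ i, Real.sin (θ i s)) * (∑ j, (1 + Real.cos (θ j s)))) with hEdef
  have hWd : ∀ s, HasDerivAt W (-γ * W s + νc - E s) s := by
    intro s
    have h1 : HasDerivAt (fun u => ∑ i, ω i u)
        (∑ i, (-γ * ω i s + ν i - κ / N * Real.sin (θ i s) *
          ∑ j, (1 + Real.cos (θ j s)))) s := HasDerivAt.fun_sum (fun i _ => hω i s)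
    have h2 := h1.div_const (N:ℝ)
    have heq : (∑ i, (-γ * ω i s + ν i - κ / N * Real.sin (θ i s) *
          ∑ j, (1 + Real.cos (θ j s)))) / N = -γ * W s + νc - E s := by
      rw [Finset.sum_sub_distrib, Finset.sum_add_distrib]
      simp only [hWdef, hνc, hEdef]
      rw [← Finset.mul_sum, ← Finset.sum_mul, ← Finset.mul_sum]
      field_simp
    rw [← heq]
    exact h2
  -- bound on E
  have hEbd : ∀ s, |E s| ≤ 2 * κ := by
    intro s
    have hsin : |∑ i, Real.sin (θ i s)| ≤ N := by
      calc |∑ i, Real.sin (θ i s)| ≤ ∑ i, |Real.sin (θ i s)| :=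
            Finset.abs_sum_le_sum_abs _ _
        _ ≤ ∑ _i : Fin N, (1:ℝ) := Finset.sum_le_sum (fun i _ => abs_sin_le_one _)
        _ = N := by simp
    have hcos0 : 0 ≤ ∑ j, (1 + Real.cos (θ j s)) :=
      Finset.sum_nonneg (fun j _ => by nlinarith [neg_one_le_cos (θ j s)])
    have hcos2 : ∑ j, (1 + Real.cos (θ j s)) ≤ 2 * N := by
      calc (∑ j, (1 + Real.cos (θ j s))) ≤ ∑ _j : Fin N, (2:ℝ) :=
            Finset.sum_le_sum (fun j _ => by nlinarith [cos_le_one (θ j s)])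
        _ = 2 * N := by simp [mul_comm]
    have habs : |(∑ i, Real.sin (θ i s)) * (∑ j, (1 + Real.cos (θ j s)))| ≤ 2 * N^2 := by
      rw [abs_mul, abs_of_nonneg hcos0]
      calc |∑ i, Real.sin (θ i s)| * (∑ j, (1 + Real.cos (θ j s)))
          ≤ (N:ℝ) * (2 * N) := by
            apply mul_le_mul hsin hcos2 hcos0 (le_of_lt hNpos)
        _ = 2 * N^2 := by ring
    have hk : (0:ℝ) ≤ κ / (N:ℝ)^2 := by positivity
    calc |E s| = κ / (N:ℝ)^2 * |(∑ i, Real.sin (θ i s)) * (∑ j, (1 + Real.cos (θ j s)))| := by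
          rw [hEdef]; rw [abs_mul, abs_of_nonneg hk]
      _ ≤ κ / (N:ℝ)^2 * (2 * N^2) := mul_le_mul_of_nonneg_left habs hk
      _ = 2 * κ := by field_simp
  have hexp : ∀ s : ℝ, (0:ℝ) < Real.exp (γ * s) := fun s => Real.exp_pos _
  -- lower bound: g monotone
  set b : ℝ := (νc - 2 * κ) / γ with hb
  set B : ℝ := (νc + 2 * κ) / γ with hB
  have hgd : ∀ s, HasDerivAt (fun u => Real.exp (γ * u) * (W u - b))
      (Real.exp (γ * s) * (2 * κ - E s)) s := by
    intro s
    have he : HasDerivAt (fun u => Real.exp (γ * u)) (γ * Real.exp (γ * s)) s := by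
      have := (Real.hasDerivAt_exp (γ * s)).comp s ((hasDerivAt_id s).const_mul γ)
      simpa [mul_comm, Function.comp_def] using this
    have := he.mul ((hWd s).sub_const b)
    refine this.congr_deriv (Eq.symm ?_)
    have hgb : γ * b = νc - 2 * κ := by rw [hb]; field_simp
    linear_combination Real.exp (γ * s) * hgb
  have hhd : ∀ s, HasDerivAt (fun u => Real.exp (γ * u) * (W u - B))
      (Real.exp (γ * s) * (-(2 * κ) - E s)) s := by
    intro s
    have he : HasDerivAt (fun u => Real.exp (γ * u)) (γ * Real.exp (γ * s)) s := by
      have := (Real.hasDerivAt_exp (γ * s)).comp s ((hasDerivAt_id s).const_mul γ)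
      simpa [mul_comm, Function.comp_def] using this
    have := he.mul ((hWd s).sub_const B)
    refine this.congr_deriv (Eq.symm ?_)
    have hgB : γ * B = νc + 2 * κ := by rw [hB]; field_simp
    linear_combination Real.exp (γ * s) * hgB
  have hgmono : Monotone (fun u => Real.exp (γ * u) * (W u - b)) := by
    apply monotone_of_deriv_nonneg
    · exact fun s => (hgd s).differentiableAt
    · intro s
      rw [(hgd s).deriv]
      have hE := abs_le.mp (hEbd s)
      have he := hexp s
      nlinarith [hE.1]
  have hhanti : Antitone (fun u => Real.exp (γ * u) * (W u - B)) := by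
    apply antitone_of_deriv_nonpos
    · exact fun s => (hhd s).differentiableAt
    · intro s
      rw [(hhd s).deriv]
      have hE := abs_le.mp (hEbd s)
      have he := hexp s
      nlinarith [hE.1]
  have hexp1 : (1:ℝ) ≤ Real.exp (γ * t) := by
    rw [← Real.exp_zero]
    exact Real.exp_le_exp.mpr (by nlinarith)
  have hg0 : Real.exp (γ * 0) * (W 0 - b) = W 0 - b := by simp
  have hgt := hgmono ht
  have hht := hhanti ht
  simp only [mul_zero, Real.exp_zero, one_mul] at hgt hht
  have hbpos : 0 < b := by
    rw [hb]
    apply div_pos _ hγ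
    nlinarith
  refine ⟨lt_min hωc0 hbpos, ?_, ?_⟩
  · -- min W0 b ≤ W t
    rcases le_or_gt b (W t) with h | h
    · exact le_trans (min_le_right _ _) h
    · have h1 : Real.exp (γ * t) * (W t - b) ≤ W t - b := by
        nlinarith [hexp1, h]
      have : W 0 ≤ W t := by linarith [le_trans hgt h1]
      exact le_trans (min_le_left _ _) this
  · rcases le_or_gt (W t) B with h | h
    · exact le_trans h (le_max_right _ _)
    · have h1 : W t - B ≤ Real.exp (γ * t) * (W t - B) := by
        nlinarith [hexp1, h]
      have : W t ≤ W 0 := by linarith [le_trans h1 hht]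
      exact le_trans this (le_max_left _ _)
end

section
/- Under the assumptions $\omega^c_0 > 0$ and $\kappa < \nu^c/2$ for the deterministic second-order Winfree model with inertia, the average phase $t \mapsto \theta^c_t$ is strictly increasing and tends to infinity as $t \to \infty$. -/
open Real Filter

/-- Under `ω^c_0 > 0` and `κ < ν^c/2`, the average phase
`t ↦ θ^c_t` of the second-order Winfree model with inertia is strictly
increasing (on `t ≥ 0`) and tends to infinity. -/
theorem stmt4 (N : ℕ) (hN : 0 < N) (θ ω : Fin N → ℝ → ℝ) (ν : Fin N → ℝ)
    (γ κ : ℝ) (hγ : 0 < γ) (hκ : 0 ≤ κ)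
    (hθ : ∀ i, ∀ t : ℝ, HasDerivAt (θ i) (ω i t) t)
    (hω : ∀ i, ∀ t : ℝ, HasDerivAt (ω i)
      (-γ * ω i t + ν i - κ / N * Real.sin (θ i t) * ∑ j, (1 + Real.cos (θ j t))) t)
    (hωc0 : 0 < (∑ i, ω i 0) / N)
    (hκν : κ < ((∑ i, ν i) / N) / 2) :
    StrictMonoOn (fun t => (∑ i, θ i t) / N) (Set.Ici (0:ℝ)) ∧
    Tendsto (fun t => (∑ i, θ i t) / N) atTop atTop := by
  have hN' : (0:ℝ) < N := by exact_mod_cast hN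
  set G : ℝ → ℝ := fun t => (∑ i, θ i t) / N with hGdef
  set F : ℝ → ℝ := fun t => (∑ i, ω i t) / N with hFdef
  have hG' : ∀ t, HasDerivAt G (F t) t := fun t =>
    (HasDerivAt.fun_sum fun i _ => hθ i t).div_const N
  set c : ℝ := (∑ i, ν i) / N - 2 * κ with hcdef
  have hc : 0 < c := by simp only [hcdef]; linarith
  set m : ℝ := min (F 0) (c / γ) with hmdef
  have hm : 0 < m := lt_min hωc0 (div_pos hc hγ)
  set D : ℝ → ℝ := fun t =>
    (∑ i, (-γ * ω i t + ν i - κ / N * Real.sin (θ i t)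
      * ∑ j, (1 + Real.cos (θ j t)))) / N with hDdef
  have hF' : ∀ t, HasDerivAt F (D t) t := fun t =>
    (HasDerivAt.fun_sum fun i _ => hω i t).div_const N
  have hFbound : ∀ t, -γ * F t + c ≤ D t := by
    intro t
    set S : ℝ := ∑ j, (1 + Real.cos (θ j t)) with hSdef
    have hS0 : (0:ℝ) ≤ S :=
      Finset.sum_nonneg fun j _ => by nlinarith [Real.neg_one_le_cos (θ j t)]
    have hS2 : S ≤ 2 * N := by
      have : S ≤ ∑ _j : Fin N, (2:ℝ) :=
        Finset.sum_le_sum fun j _ => by nlinarith [Real.cos_le_one (θ j t)]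
      simpa [mul_comm] using this
    have hκN : 0 ≤ κ / N := div_nonneg hκ hN'.le
    have hterm : ∀ i : Fin N,
        κ / N * Real.sin (θ i t) * S ≤ 2 * κ := by
      intro i
      have hsin := Real.sin_le_one (θ i t)
      have h1 : κ / N * Real.sin (θ i t) * S ≤ κ / N * S := by
        have := mul_le_mul_of_nonneg_right
          (mul_le_mul_of_nonneg_left hsin hκN) hS0
        simpa using this
      have h2 : κ / N * S ≤ κ / N * (2 * N) :=
        mul_le_mul_of_nonneg_left hS2 hκN
      have h3 : κ / N * (2 * N) = 2 * κ := by field_simp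
      linarith
    have hsum : ∑ i, (-γ * ω i t + ν i - 2 * κ)
        ≤ ∑ i, (-γ * ω i t + ν i - κ / N * Real.sin (θ i t) * S) :=
      Finset.sum_le_sum fun i _ => by linarith [hterm i]
    have hL : (∑ i, (-γ * ω i t + ν i - 2 * κ))
        = -γ * (∑ i, ω i t) + (∑ i, ν i) - N * (2 * κ) := by
      rw [Finset.sum_sub_distrib, Finset.sum_add_distrib, ← Finset.mul_sum,
        Finset.sum_const, Finset.card_univ]
      simp [nsmul_eq_mul]
    have hLeq : -γ * F t + c
        = (∑ i, (-γ * ω i t + ν i - 2 * κ)) / N := by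
      rw [hL]
      simp only [hFdef, hcdef]
      field_simp
      ring
    rw [hLeq, hDdef]
    exact div_le_div_of_nonneg_right hsum hN'.le
  -- Key: F t ≥ m for t ≥ 0, via integrating factor
  have key : ∀ t, 0 ≤ t → m ≤ F t := by
    intro t ht
    set H : ℝ → ℝ := fun s => Real.exp (γ * s) * F s
      - c / γ * (Real.exp (γ * s) - 1) with hHdef
    have hH' : ∀ s, HasDerivAt H
        (Real.exp (γ * s) * γ * F s + Real.exp (γ * s) * D s
          - c / γ * (Real.exp (γ * s) * γ)) s := by
      intro s
      have h1 : HasDerivAt (fun s : ℝ => γ * s) γ s := by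
        simpa using (hasDerivAt_id s).const_mul γ
      have he : HasDerivAt (fun s : ℝ => Real.exp (γ * s))
          (Real.exp (γ * s) * γ) s := h1.exp
      have := (he.mul (hF' s)).sub ((he.sub_const 1).const_mul (c / γ))
      exact this
    have hHmono : Monotone H := by
      apply monotone_of_deriv_nonneg
      · exact fun s => (hH' s).differentiableAt
      · intro s
        rw [(hH' s).deriv]
        have hD := hFbound s
        have hexp := Real.exp_pos (γ * s)
        have hcg : c / γ * (Real.exp (γ * s) * γ) = c * Real.exp (γ * s) := by
          field_simp
        rw [hcg]
        nlinarith [mul_le_mul_of_nonneg_left hD hexp.le]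
    have h0 : H 0 = F 0 := by simp [hHdef]
    have hHt : F 0 ≤ H t := h0 ▸ hHmono ht
    have hexp1 : 1 ≤ Real.exp (γ * t) :=
      Real.one_le_exp (by positivity)
    have hexp : 0 < Real.exp (γ * t) := Real.exp_pos _
    have hm1 : m ≤ F 0 := min_le_left _ _
    have hm2 : m ≤ c / γ := min_le_right _ _
    -- H t = exp(γt) F t - c/γ (exp(γt)-1) ≥ F 0 ≥ m
    have : m * Real.exp (γ * t) ≤ Real.exp (γ * t) * F t := by
      simp only [hHdef] at hHt
      nlinarith [mul_le_mul_of_nonneg_right hm2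
        (by linarith : (0:ℝ) ≤ Real.exp (γ * t) - 1)]
    nlinarith
  have hGdiff : ∀ t, DifferentiableAt ℝ G t := fun t => (hG' t).differentiableAt
  have hGcont : ContinuousOn G (Set.Ici (0:ℝ)) :=
    (Differentiable.continuous hGdiff).continuousOn
  constructor
  · apply strictMonoOn_of_deriv_pos (convex_Ici 0) hGcont
    intro t ht
    rw [interior_Ici] at ht
    rw [(hG' t).deriv]
    exact hm.trans_le (key t ht.le)
  · -- lower bound G t ≥ G 0 + m * t for t ≥ 0
    set K : ℝ → ℝ := fun t => G t - m * t with hKdef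
    have hK' : ∀ t, HasDerivAt K (F t - m) t := by
      intro t
      have := (hG' t).sub ((hasDerivAt_id t).const_mul m)
      simp only [mul_one] at this
      exact this
    have hKmono : MonotoneOn K (Set.Ici (0:ℝ)) := by
      apply monotoneOn_of_deriv_nonneg (convex_Ici 0)
      · exact (Differentiable.continuous fun t => (hK' t).differentiableAt).continuousOn
      · exact fun t _ => ((hK' t).differentiableAt).differentiableWithinAt
      · intro t ht
        rw [interior_Ici] at ht
        rw [(hK' t).deriv]
        linarith [key t ht.le]
    have hlow : ∀ t, 0 ≤ t → G 0 + m * t ≤ G t := by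
      intro t ht
      have := hKmono (Set.self_mem_Ici) (Set.mem_Ici.mpr ht) ht
      simp only [hKdef] at this
      linarith
    have hlin : Tendsto (fun t : ℝ => G 0 + m * t) atTop atTop :=
      tendsto_atTop_add_const_left _ _ (tendsto_id.const_mul_atTop hm)
    apply tendsto_atTop_mono' atTop _ hlin
    filter_upwards [eventually_ge_atTop (0:ℝ)] with t ht
    exact hlow t ht
end

section
/- Let $(\Theta_t, \Omega_t)$ be a global smooth solution of the second-order Winfree model with inertia. Suppose there exist $T, D > 0$ with $\sup_{t\in[0,T]} \mathcal{D}(\Theta_t) \le D$, where $\mathcal{D}(x) = \max_{i,j}|x^i - x^j|$. Then $\sup_{t\in[0,T]}\mathcal{D}(\Omega_t) \le \max\{\mathcal{D}(\Omega_0), (\mathcal{D}(\nu) + 2\kappa D)/\gamma\}$. -/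
open Real

/-- Diameter of a vector in `ℝ^N`: `𝒟(x) = max_{i,j} |x^i - x^j|`. -/
noncomputable def vdiam {N : ℕ} (x : Fin N → ℝ) : ℝ := ⨆ i, ⨆ j, |x i - x j|

lemma le_vdiam {N : ℕ} (x : Fin N → ℝ) (i j : Fin N) : |x i - x j| ≤ vdiam x := by
  have h1 : |x i - x j| ≤ ⨆ j, |x i - x j| :=
    le_ciSup (Set.Finite.bddAbove (Set.finite_range fun j => |x i - x j|)) j
  exact h1.trans (le_ciSup (Set.Finite.bddAbove (Set.finite_range fun i => ⨆ j, |x i - x j|)) i)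

lemma vdiam_le {N : ℕ} (hN : 0 < N) {x : Fin N → ℝ} {M : ℝ}
    (h : ∀ i j, |x i - x j| ≤ M) : vdiam x ≤ M := by
  haveI : Nonempty (Fin N) := Fin.pos_iff_nonempty.mp hN
  exact ciSup_le fun i => ciSup_le fun j => h i j

lemma vdiam_nonneg {N : ℕ} (hN : 0 < N) (x : Fin N → ℝ) : 0 ≤ vdiam x := by
  have i : Fin N := ⟨0, hN⟩
  have := le_vdiam x i i
  simpa using this

/-- If the phase diameter of a solution of the second-order
Winfree model with inertia stays below `D` on `[0,T]`, then the frequency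
diameter is bounded by `max{𝒟(Ω₀), (𝒟(ν)+2κD)/γ}` on `[0,T]`. -/
theorem stmt5 (N : ℕ) (hN : 0 < N) (θ ω : Fin N → ℝ → ℝ) (ν : Fin N → ℝ)
    (γ κ : ℝ) (hγ : 0 < γ) (hκ : 0 ≤ κ)
    (hθ : ∀ i, ∀ t : ℝ, HasDerivAt (θ i) (ω i t) t)
    (hω : ∀ i, ∀ t : ℝ, HasDerivAt (ω i)
      (-γ * ω i t + ν i - κ / N * Real.sin (θ i t) * ∑ j, (1 + Real.cos (θ j t))) t)
    (T D : ℝ) (hT : 0 < T) (hD : 0 < D)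
    (hsup : ∀ t ∈ Set.Icc (0:ℝ) T, vdiam (fun i => θ i t) ≤ D) :
    ∀ t ∈ Set.Icc (0:ℝ) T,
      vdiam (fun i => ω i t) ≤ max (vdiam (fun i => ω i 0)) ((vdiam ν + 2 * κ * D) / γ) := by
  intro t ht
  obtain ⟨ht0, htT⟩ := ht
  set M : ℝ := max (vdiam (fun i => ω i 0)) ((vdiam ν + 2 * κ * D) / γ) with hM
  set C : ℝ := vdiam ν + 2 * κ * D with hC
  have hNR : (0:ℝ) < (N:ℝ) := by exact_mod_cast hN
  have hCM : C / γ ≤ M := le_max_right _ _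
  have hωM : vdiam (fun i => ω i 0) ≤ M := le_max_left _ _
  -- continuity of ω and θ
  have hθc : ∀ k, Continuous (θ k) := fun k =>
    continuous_iff_continuousAt.mpr fun s => (hθ k s).continuousAt
  have hωc : ∀ k, Continuous (ω k) := fun k =>
    continuous_iff_continuousAt.mpr fun s => (hω k s).continuousAt
  set S : ℝ → ℝ := fun s => ∑ k, (1 + Real.cos (θ k s)) with hS
  have hSc : Continuous S := by
    apply continuous_finset_sum
    intro k _
    exact continuous_const.add ((Real.continuous_cos).comp (hθc k))
  have hSbound : ∀ s, 0 ≤ S s ∧ S s ≤ 2 * N := by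
    intro s
    constructor
    · apply Finset.sum_nonneg
      intro k _
      nlinarith [Real.neg_one_le_cos (θ k s)]
    · calc S s ≤ ∑ _k : Fin N, (2:ℝ) := by
            apply Finset.sum_le_sum
            intro k _
            nlinarith [Real.cos_le_one (θ k s)]
        _ = 2 * N := by simp [mul_comm]
  apply vdiam_le hN
  intro i j
  -- setup
  set f : ℝ → ℝ := fun s => ω i s - ω j s with hf
  set g : ℝ → ℝ := fun s => Real.exp (γ * s) * f s with hg
  set g' : ℝ → ℝ := fun s =>
    Real.exp (γ * s) * (ν i - ν j - κ / N * (Real.sin (θ i s) - Real.sin (θ j s)) * S s) with hg'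
  have hgderiv : ∀ s, HasDerivAt g (g' s) s := by
    intro s
    have he : HasDerivAt (fun y => Real.exp (γ * y)) (Real.exp (γ * s) * (γ * 1)) s :=
      ((hasDerivAt_id s).const_mul γ).exp
    have hfd : HasDerivAt f
        ((-γ * ω i s + ν i - κ / N * Real.sin (θ i s) * S s)
          - (-γ * ω j s + ν j - κ / N * Real.sin (θ j s) * S s)) s :=
      (hω i s).sub (hω j s)
    have := he.mul hfd
    refine this.congr_deriv ?_
    simp only [hf, hg']
    ring
  have hg'c : Continuous g' := by
    apply Continuous.mul
    · exact Real.continuous_exp.comp (continuous_const.mul continuous_id)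
    · apply Continuous.sub continuous_const
      exact (continuous_const.mul ((Real.continuous_sin.comp (hθc i)).sub
        (Real.continuous_sin.comp (hθc j)))).mul hSc
  -- pointwise bound on |g'| on [0, t]
  have hbound : ∀ s ∈ Set.Icc (0:ℝ) t, |g' s| ≤ C * Real.exp (γ * s) := by
    intro s hs
    have hsT : s ∈ Set.Icc (0:ℝ) T := ⟨hs.1, hs.2.trans htT⟩
    have hθij : |θ i s - θ j s| ≤ D :=
      (le_vdiam (fun k => θ k s) i j).trans (hsup s hsT)
    have hsin : |Real.sin (θ i s) - Real.sin (θ j s)| ≤ |θ i s - θ j s| := by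
      have h1 : |Real.sin ((θ i s - θ j s) / 2)| ≤ |θ i s - θ j s| / 2 := by
        have := Real.abs_sin_le_abs (x := (θ i s - θ j s) / 2)
        rwa [abs_div, abs_two] at this
      have h2 := Real.abs_cos_le_one ((θ i s + θ j s) / 2)
      rw [Real.sin_sub_sin, abs_mul, abs_mul, abs_two]
      nlinarith [abs_nonneg (Real.sin ((θ i s - θ j s) / 2)),
        abs_nonneg (Real.cos ((θ i s + θ j s) / 2))]
    have hν : |ν i - ν j| ≤ vdiam ν := le_vdiam ν i j
    obtain ⟨hS0, hS2⟩ := hSbound s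
    have hκN : 0 ≤ κ / N := div_nonneg hκ hNR.le
    have habs : |ν i - ν j - κ / N * (Real.sin (θ i s) - Real.sin (θ j s)) * S s| ≤ C := by
      have h1 : |κ / N * (Real.sin (θ i s) - Real.sin (θ j s)) * S s| ≤ 2 * κ * D := by
        rw [abs_mul, abs_mul, abs_of_nonneg hκN, abs_of_nonneg hS0]
        have h2 : |Real.sin (θ i s) - Real.sin (θ j s)| ≤ D := hsin.trans hθij
        calc κ / N * |Real.sin (θ i s) - Real.sin (θ j s)| * S s
            ≤ κ / N * D * (2 * N) := by
              apply mul_le_mul _ hS2 hS0 (by positivity)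
              exact mul_le_mul_of_nonneg_left h2 hκN
          _ = 2 * κ * D := by field_simp
      calc |ν i - ν j - κ / N * (Real.sin (θ i s) - Real.sin (θ j s)) * S s|
          ≤ |ν i - ν j| + |κ / N * (Real.sin (θ i s) - Real.sin (θ j s)) * S s| :=
            abs_sub _ _
        _ ≤ vdiam ν + 2 * κ * D := add_le_add hν h1
        _ = C := hC.symm
    calc |g' s| = Real.exp (γ * s) *
          |ν i - ν j - κ / N * (Real.sin (θ i s) - Real.sin (θ j s)) * S s| := by
            rw [hg']; rw [abs_mul, abs_of_pos (Real.exp_pos _)]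
      _ ≤ Real.exp (γ * s) * C :=
          mul_le_mul_of_nonneg_left habs (Real.exp_pos _).le
      _ = C * Real.exp (γ * s) := mul_comm _ _
  -- FTC
  have hftc : ∫ s in (0:ℝ)..t, g' s = g t - g 0 :=
    intervalIntegral.integral_eq_sub_of_hasDerivAt (fun s _ => hgderiv s)
      (hg'c.intervalIntegrable _ _)
  have hexpint : ∫ s in (0:ℝ)..t, C * Real.exp (γ * s)
      = C / γ * Real.exp (γ * t) - C / γ * Real.exp (γ * 0) := by
    apply intervalIntegral.integral_eq_sub_of_hasDerivAt
    · intro s _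
      have : HasDerivAt (fun y => C / γ * Real.exp (γ * y))
          (C / γ * (Real.exp (γ * s) * (γ * 1))) s :=
        (((hasDerivAt_id s).const_mul γ).exp).const_mul (C / γ)
      refine this.congr_deriv ?_
      rw [mul_one, mul_comm (Real.exp _) γ, ← mul_assoc, div_mul_cancel₀ C hγ.ne']
    · exact (continuous_const.mul (Real.continuous_exp.comp
        (continuous_const.mul continuous_id))).intervalIntegrable _ _
  have hint : |g t - g 0| ≤ C / γ * (Real.exp (γ * t) - 1) := by
    rw [← hftc]
    calc |∫ s in (0:ℝ)..t, g' s| ≤ ∫ s in (0:ℝ)..t, |g' s| := by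
          simpa [Real.norm_eq_abs] using
            intervalIntegral.norm_integral_le_integral_norm (f := g') (μ := MeasureTheory.volume) ht0
      _ ≤ ∫ s in (0:ℝ)..t, C * Real.exp (γ * s) := by
          apply intervalIntegral.integral_mono_on ht0
          · exact (hg'c.abs.intervalIntegrable _ _)
          · exact (continuous_const.mul (Real.continuous_exp.comp
              (continuous_const.mul continuous_id))).intervalIntegrable _ _
          · exact hbound
      _ = C / γ * (Real.exp (γ * t) - 1) := by
          rw [hexpint]; simp [mul_sub]
  -- conclude
  have hMC : 0 ≤ M := le_trans (vdiam_nonneg hN _) hωM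
  have hf0 : |f 0| ≤ M := (le_vdiam (fun k => ω k 0) i j).trans hωM
  have hexp1 : (1:ℝ) ≤ Real.exp (γ * t) := by
    rw [← Real.exp_zero]
    exact Real.exp_le_exp.mpr (by positivity)
  have hgt : |g t| ≤ |g 0| + C / γ * (Real.exp (γ * t) - 1) := by
    have := abs_sub_abs_le_abs_sub (g t) (g 0)
    linarith [hint]
  have hg0 : |g 0| = |f 0| := by simp [hg]
  have hgtM : |g t| ≤ M * Real.exp (γ * t) := by
    calc |g t| ≤ |f 0| + C / γ * (Real.exp (γ * t) - 1) := by rw [← hg0]; exact hgt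
      _ ≤ M + M * (Real.exp (γ * t) - 1) := by
          have h1 : C / γ * (Real.exp (γ * t) - 1) ≤ M * (Real.exp (γ * t) - 1) :=
            mul_le_mul_of_nonneg_right hCM (by linarith)
          linarith
      _ = M * Real.exp (γ * t) := by ring
  have hgteq : |g t| = Real.exp (γ * t) * |f t| := by
    rw [hg]
    simp [abs_mul, abs_of_pos (Real.exp_pos _)]
  have : Real.exp (γ * t) * |f t| ≤ M * Real.exp (γ * t) := by
    rw [← hgteq]; exact hgtM
  have hfin : |f t| ≤ M := by
    have hep := Real.exp_pos (γ * t)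
    nlinarith
  exact hfin
end

section
/- Let $\theta^1,\dots,\theta^N \in \mathbb{R}$ with $\max_{i,j}|\theta^i - \theta^j| \le D$ and let $\theta^c = \frac1N\sum_k \theta^k$, $\mathcal{I} = \frac1N\sum_k(1+\cos\theta^k)$. Then for any indices $i,j$, writing $\theta^{ij} = \theta^i - \theta^j$: $\kappa\theta^{ij}\cos\theta^c(1+\cos\theta^c) - \kappa\mathcal{I}(\sin\theta^i - \sin\theta^j) \le 3\kappa D^2$ for any $\kappa \ge 0$. -/
open Real

lemma cos_lip (a b : ℝ) : |Real.cos a - Real.cos b| ≤ |a - b| := by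
  rw [Real.cos_sub_cos]
  have h1 : |Real.sin ((a + b) / 2)| ≤ 1 := Real.abs_sin_le_one _
  have h2 : |Real.sin ((a - b) / 2)| ≤ |(a - b) / 2| := Real.abs_sin_le_abs
  have : |(a - b) / 2| = |a - b| / 2 := by rw [abs_div]; norm_num
  calc |-2 * Real.sin ((a + b) / 2) * Real.sin ((a - b) / 2)|
      = 2 * |Real.sin ((a + b) / 2)| * |Real.sin ((a - b) / 2)| := by
        rw [abs_mul, abs_mul]; norm_num
    _ ≤ 2 * 1 * (|a - b| / 2) := by
        apply mul_le_mul _ (this ▸ h2) (abs_nonneg _) (by positivity)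
        nlinarith [abs_nonneg (Real.sin ((a+b)/2))]
    _ = |a - b| := by ring

lemma taylor_sin_aux (c x : ℝ) (h : c ≤ x) :
    |Real.sin x - Real.sin c - (x - c) * Real.cos c| ≤ (x - c) ^ 2 / 2 := by
  have h1 : Real.sin x - Real.sin c - (x - c) * Real.cos c
      = ∫ t in c..x, (Real.cos t - Real.cos c) := by
    rw [intervalIntegral.integral_sub (Real.continuous_cos.intervalIntegrable c x)
      (intervalIntegrable_const)]
    rw [integral_cos, intervalIntegral.integral_const]
    simp only [smul_eq_mul]
  rw [h1]
  have h2 : |∫ t in c..x, (Real.cos t - Real.cos c)|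
      ≤ ∫ t in c..x, |Real.cos t - Real.cos c| :=
    intervalIntegral.abs_integral_le_integral_abs h
  have h3 : (∫ t in c..x, |Real.cos t - Real.cos c|) ≤ ∫ t in c..x, (t - c) := by
    apply intervalIntegral.integral_mono_on h
    · exact ((Real.continuous_cos.sub continuous_const).abs).intervalIntegrable c x
    · exact (continuous_id.sub continuous_const).intervalIntegrable c x
    · intro t ht
      calc |Real.cos t - Real.cos c| ≤ |t - c| := cos_lip t c
        _ = t - c := abs_of_nonneg (by linarith [ht.1])
  have h4 : (∫ t in c..x, (t - c)) = (x - c) ^ 2 / 2 := by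
    rw [intervalIntegral.integral_sub (intervalIntegral.intervalIntegrable_id)
      (intervalIntegrable_const)]
    rw [integral_id, intervalIntegral.integral_const]
    simp only [smul_eq_mul]
    ring
  linarith

lemma taylor_sin (c x : ℝ) :
    |Real.sin x - Real.sin c - (x - c) * Real.cos c| ≤ (x - c) ^ 2 / 2 := by
  rcases le_total c x with h | h
  · exact taylor_sin_aux c x h
  · have h2 := taylor_sin_aux (-c) (-x) (by linarith)
    rw [Real.sin_neg, Real.sin_neg, Real.cos_neg] at h2
    calc |Real.sin x - Real.sin c - (x - c) * Real.cos c|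
        = |-Real.sin x - -Real.sin c - (-x - -c) * Real.cos c| := by
          rw [← abs_neg]; congr 1; ring
      _ ≤ (-x - -c) ^ 2 / 2 := h2
      _ = (x - c) ^ 2 / 2 := by ring

/-- Key trigonometric estimate: if `max_{i,j}|θ^i - θ^j| ≤ D`,
`θ^c` is the average phase and `𝓘 = (1/N)∑_k(1+cos θ^k)`, then
`κ θ^{ij} cos θ^c (1+cos θ^c) - κ 𝓘 (sin θ^i - sin θ^j) ≤ 3κD²`. -/
theorem stmt9 (N : ℕ) (hN : 0 < N) (θ : Fin N → ℝ) (D κ : ℝ)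
    (hκ : 0 ≤ κ)
    (hD : ∀ i j, |θ i - θ j| ≤ D) :
    ∀ i j : Fin N,
      κ * (θ i - θ j) * Real.cos ((∑ k, θ k) / N) * (1 + Real.cos ((∑ k, θ k) / N))
        - κ * ((∑ k, (1 + Real.cos (θ k))) / N) * (Real.sin (θ i) - Real.sin (θ j))
      ≤ 3 * κ * D ^ 2 := by
  intro i j
  set θc : ℝ := (∑ k, θ k) / N with hθc
  set I : ℝ := (∑ k, (1 + Real.cos (θ k))) / N with hI
  have hNpos : (0 : ℝ) < N := by exact_mod_cast hN
  have hD0 : 0 ≤ D := le_trans (abs_nonneg _) (hD i i)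
  -- each θ k is within D of θc
  have hclose : ∀ k, |θ k - θc| ≤ D := by
    intro k
    have : θ k - θc = (∑ m, (θ k - θ m)) / N := by
      rw [Finset.sum_sub_distrib, Finset.sum_const, Finset.card_univ, Fintype.card_fin]
      field_simp [hθc]
      rw [nsmul_eq_mul, sub_mul, div_mul_cancel₀ _ hNpos.ne']; ring
    rw [this, abs_div, abs_of_pos hNpos, div_le_iff₀ hNpos]
    calc |∑ m, (θ k - θ m)| ≤ ∑ m, |θ k - θ m| := Finset.abs_sum_le_sum_abs _ _
      _ ≤ ∑ _m : Fin N, D := Finset.sum_le_sum (fun m _ => hD k m)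
      _ = D * N := by rw [Finset.sum_const, Finset.card_univ, Fintype.card_fin]; ring
  -- |1 + cos θc - I| ≤ D
  have hIclose : |1 + Real.cos θc - I| ≤ D := by
    have : 1 + Real.cos θc - I = (∑ k, (Real.cos θc - Real.cos (θ k))) / N := by
      rw [Finset.sum_sub_distrib, Finset.sum_const, Finset.card_univ, Fintype.card_fin]
      rw [hI, Finset.sum_add_distrib, Finset.sum_const, Finset.card_univ, Fintype.card_fin]
      field_simp
      ring
    rw [this, abs_div, abs_of_pos hNpos, div_le_iff₀ hNpos]
    calc |∑ k, (Real.cos θc - Real.cos (θ k))| ≤ ∑ k, |Real.cos θc - Real.cos (θ k)| :=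
          Finset.abs_sum_le_sum_abs _ _
      _ ≤ ∑ k : Fin N, D := Finset.sum_le_sum (fun k _ => by
          calc |Real.cos θc - Real.cos (θ k)| ≤ |θc - θ k| := cos_lip _ _
            _ = |θ k - θc| := abs_sub_comm _ _
            _ ≤ D := hclose k)
      _ = D * N := by rw [Finset.sum_const, Finset.card_univ, Fintype.card_fin]; ring
  -- 0 ≤ I ≤ 2
  have hI0 : 0 ≤ I := by
    apply div_nonneg _ (le_of_lt hNpos)
    apply Finset.sum_nonneg
    intro k _
    nlinarith [Real.neg_one_le_cos (θ k)]
  have hI2 : I ≤ 2 := by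
    rw [hI, div_le_iff₀ hNpos]
    calc (∑ k, (1 + Real.cos (θ k))) ≤ ∑ _k : Fin N, (2:ℝ) :=
          Finset.sum_le_sum (fun k _ => by nlinarith [Real.cos_le_one (θ k)])
      _ = 2 * N := by rw [Finset.sum_const, Finset.card_univ, Fintype.card_fin]; ring
  -- Taylor estimate
  have hti : |Real.sin (θ i) - Real.sin θc - (θ i - θc) * Real.cos θc| ≤ D ^ 2 / 2 := by
    refine le_trans (taylor_sin θc (θ i)) ?_
    have := hclose i
    nlinarith [sq_abs (θ i - θc), abs_nonneg (θ i - θc)]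
  have htj : |Real.sin (θ j) - Real.sin θc - (θ j - θc) * Real.cos θc| ≤ D ^ 2 / 2 := by
    refine le_trans (taylor_sin θc (θ j)) ?_
    have := hclose j
    nlinarith [sq_abs (θ j - θc), abs_nonneg (θ j - θc)]
  have hT : |Real.sin (θ i) - Real.sin (θ j) - (θ i - θ j) * Real.cos θc| ≤ D ^ 2 := by
    have h := abs_add_le (Real.sin (θ i) - Real.sin θc - (θ i - θc) * Real.cos θc)
      (-(Real.sin (θ j) - Real.sin θc - (θ j - θc) * Real.cos θc))
    rw [abs_neg] at h
    calc |Real.sin (θ i) - Real.sin (θ j) - (θ i - θ j) * Real.cos θc|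
        = |(Real.sin (θ i) - Real.sin θc - (θ i - θc) * Real.cos θc) +
            -(Real.sin (θ j) - Real.sin θc - (θ j - θc) * Real.cos θc)| := by congr 1; ring
      _ ≤ _ := h
      _ ≤ D ^ 2 := by linarith
  -- |θij cos θc| ≤ D
  have hijc : |(θ i - θ j) * Real.cos θc| ≤ D := by
    rw [abs_mul]
    calc |θ i - θ j| * |Real.cos θc| ≤ D * 1 :=
        mul_le_mul (hD i j) (Real.abs_cos_le_one θc) (abs_nonneg _) hD0
      _ = D := mul_one D
  -- decompose
  have key : κ * (θ i - θ j) * Real.cos θc * (1 + Real.cos θc)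
      - κ * I * (Real.sin (θ i) - Real.sin (θ j))
      = κ * ((θ i - θ j) * Real.cos θc) * (1 + Real.cos θc - I)
        - κ * I * (Real.sin (θ i) - Real.sin (θ j) - (θ i - θ j) * Real.cos θc) := by
    ring
  rw [key]
  have h1 : κ * ((θ i - θ j) * Real.cos θc) * (1 + Real.cos θc - I) ≤ κ * D * D := by
    calc κ * ((θ i - θ j) * Real.cos θc) * (1 + Real.cos θc - I)
        ≤ |κ * ((θ i - θ j) * Real.cos θc) * (1 + Real.cos θc - I)| := le_abs_self _
      _ = κ * (|(θ i - θ j) * Real.cos θc| * |1 + Real.cos θc - I|) := by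
          rw [abs_mul, abs_mul, abs_of_nonneg hκ]; ring
      _ ≤ κ * (D * D) := by
          apply mul_le_mul_of_nonneg_left _ hκ
          exact mul_le_mul hijc hIclose (abs_nonneg _) hD0
      _ = κ * D * D := by ring
  have h2 : -(κ * I * (Real.sin (θ i) - Real.sin (θ j) - (θ i - θ j) * Real.cos θc))
      ≤ κ * 2 * D ^ 2 := by
    calc -(κ * I * (Real.sin (θ i) - Real.sin (θ j) - (θ i - θ j) * Real.cos θc))
        ≤ |κ * I * (Real.sin (θ i) - Real.sin (θ j) - (θ i - θ j) * Real.cos θc)| :=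
          neg_le_abs _
      _ = κ * I * |Real.sin (θ i) - Real.sin (θ j) - (θ i - θ j) * Real.cos θc| := by
          rw [abs_mul, abs_mul, abs_of_nonneg hκ, abs_of_nonneg hI0]
      _ ≤ κ * 2 * D ^ 2 :=
          mul_le_mul (by nlinarith) hT (abs_nonneg _) (by positivity)
  nlinarith
end
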